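/- Let φ ∈ (1/2, 1) and σ > 0. Then σ·Φ⁻¹(φ) > √(πσ²/2)·(2φ - 1), i.e. the certified radius σΦ⁻¹(φ) of the proposed method strictly exceeds the Smoothed Embeddings radius √(πσ²/2)·(2φ - 1) expressed in terms of the same margin quantity. -/

import Mathlib

open MeasureTheory ProbabilityTheory

/-- The isotropic Gaussian measure `N(0, σ²I)` on `ℝⁿ` (as `EuclideanSpace`). -/
noncomputable def gaussMeasure (n : ℕ) (σ : ℝ) : Measure (EuclideanSpace ℝ (Fin n)) :=
  (Measure.pi fun _ : Fin n => gaussianReal 0 (σ ^ 2).toNNReal).map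
    (EuclideanSpace.equiv (Fin n) ℝ).symm

/-- The standard Gaussian cumulative distribution function `Φ`. -/
noncomputable def stdGaussCDF : ℝ → ℝ := fun t => cdf (gaussianReal 0 1) t

/-- The inverse `Φ⁻¹` of the standard Gaussian CDF. -/
noncomputable def stdGaussCDFInv : ℝ → ℝ := Function.invFun stdGaussCDF

open Set Filter Real

private lemma stdGaussCDF_eq (t : ℝ) :
    stdGaussCDF t = ∫ x in Iic t, gaussianPDFReal 0 1 x := by
  rw [stdGaussCDF, cdf_eq_real, measureReal_def, gaussianReal_apply_eq_integral 0 one_ne_zero,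
    ENNReal.toReal_ofReal]
  exact setIntegral_nonneg measurableSet_Iic fun x _ => gaussianPDFReal_nonneg 0 1 x

private lemma integrable_pdf : Integrable (gaussianPDFReal 0 1) :=
  integrable_gaussianPDFReal 0 1

private lemma stdGaussCDF_sub (a b : ℝ) :
    stdGaussCDF b - stdGaussCDF a = ∫ x in a..b, gaussianPDFReal 0 1 x := by
  rw [stdGaussCDF_eq, stdGaussCDF_eq]
  exact intervalIntegral.integral_Iic_sub_Iic integrable_pdf.integrableOn integrable_pdf.integrableOn

private lemma stdGaussCDF_strictMono : StrictMono stdGaussCDF := by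
  intro a b hab
  have h := stdGaussCDF_sub a b
  have hpos : 0 < ∫ x in a..b, gaussianPDFReal 0 1 x :=
    intervalIntegral.intervalIntegral_pos_of_pos integrable_pdf.intervalIntegrable
      (fun x => gaussianPDFReal_pos 0 1 x one_ne_zero) hab
  linarith

private lemma stdGaussCDF_continuous : Continuous stdGaussCDF := by
  have h : ∀ t, stdGaussCDF t = stdGaussCDF 0 + ∫ x in (0:ℝ)..t, gaussianPDFReal 0 1 x := by
    intro t
    have := stdGaussCDF_sub 0 t
    linarith
  rw [show stdGaussCDF = fun t => stdGaussCDF 0 + ∫ x in (0:ℝ)..t, gaussianPDFReal 0 1 x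
    from funext h]
  exact continuous_const.add (integrable_pdf.continuous_primitive 0)

private lemma stdGaussCDF_zero : stdGaussCDF 0 = 1 / 2 := by
  have heven : ∀ x : ℝ, gaussianPDFReal 0 1 (-x) = gaussianPDFReal 0 1 x := by
    intro x; simp [gaussianPDFReal]
  have h1 : (∫ x in Iic (0:ℝ), gaussianPDFReal 0 1 x)
      = ∫ x in Ioi (0:ℝ), gaussianPDFReal 0 1 x := by
    calc (∫ x in Iic (0:ℝ), gaussianPDFReal 0 1 x)
        = ∫ x in Iic (0:ℝ), gaussianPDFReal 0 1 (-x) := by simp_rw [heven]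
      _ = ∫ x in Ioi (-0:ℝ), gaussianPDFReal 0 1 x := integral_comp_neg_Iic 0 _
      _ = ∫ x in Ioi (0:ℝ), gaussianPDFReal 0 1 x := by norm_num
  have h2 : (∫ x in Iic (0:ℝ), gaussianPDFReal 0 1 x)
      + ∫ x in Ioi (0:ℝ), gaussianPDFReal 0 1 x = 1 := by
    rw [intervalIntegral.integral_Iic_add_Ioi integrable_pdf.integrableOn integrable_pdf.integrableOn]
    exact integral_gaussianPDFReal_eq_one 0 one_ne_zero
  rw [stdGaussCDF_eq]
  linarith

private lemma stdGaussCDF_surj {p : ℝ} (hp : p ∈ Set.Ioo (0:ℝ) 1) :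
    ∃ t, stdGaussCDF t = p := by
  obtain ⟨hp0, hp1⟩ := hp
  have ha : ∀ᶠ a in atBot, stdGaussCDF a < p :=
    (tendsto_cdf_atBot (gaussianReal 0 1)).eventually_lt_const hp0
  have hb : ∀ᶠ b in atTop, p < stdGaussCDF b :=
    (tendsto_cdf_atTop (gaussianReal 0 1)).eventually_const_lt hp1
  obtain ⟨a, haa⟩ := ha.exists
  obtain ⟨b, hbb⟩ := hb.exists
  have hab : a ≤ b := by
    by_contra h
    push_neg at h
    have := stdGaussCDF_strictMono h
    linarith
  have := intermediate_value_Icc hab stdGaussCDF_continuous.continuousOn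
  have hmem : p ∈ Icc (stdGaussCDF a) (stdGaussCDF b) := ⟨haa.le, hbb.le⟩
  obtain ⟨t, _, ht⟩ := this hmem
  exact ⟨t, ht⟩

private lemma stdGaussCDF_invFun {p : ℝ} (hp : p ∈ Set.Ioo (0:ℝ) 1) :
    stdGaussCDF (stdGaussCDFInv p) = p :=
  Function.invFun_eq (stdGaussCDF_surj hp)

/-- Key estimate: `Φ t < 1/2 + t / √(2π)` for `t > 0`. -/
private lemma stdGaussCDF_lt (t : ℝ) (ht : 0 < t) :
    stdGaussCDF t < 1 / 2 + t / Real.sqrt (2 * Real.pi) := by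
  set c : ℝ := (Real.sqrt (2 * Real.pi))⁻¹ with hc
  have hπ : 0 < Real.sqrt (2 * Real.pi) := Real.sqrt_pos.2 (by positivity)
  have hpdf : ∀ x : ℝ, gaussianPDFReal 0 1 x = c * Real.exp (-x ^ 2 / 2) := by
    intro x
    simp only [gaussianPDFReal, NNReal.coe_one, mul_one, sub_zero, one_div, hc]
  have hlt : ∀ x ∈ Ioo 0 t, 0 < c - gaussianPDFReal 0 1 x := by
    intro x hx
    rw [hpdf]
    have : Real.exp (-x ^ 2 / 2) < 1 := by
      apply Real.exp_lt_one_iff.2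
      nlinarith [hx.1]
    nlinarith [inv_pos.2 hπ]
  have hint : IntervalIntegrable (fun x => c - gaussianPDFReal 0 1 x) volume 0 t :=
    (intervalIntegrable_const).sub integrable_pdf.intervalIntegrable
  have hpos : 0 < ∫ x in (0:ℝ)..t, (c - gaussianPDFReal 0 1 x) :=
    intervalIntegral.intervalIntegral_pos_of_pos_on hint hlt ht
  rw [intervalIntegral.integral_sub intervalIntegrable_const
    integrable_pdf.intervalIntegrable, intervalIntegral.integral_const, smul_eq_mul] at hpos
  have hsub := stdGaussCDF_sub 0 t
  rw [stdGaussCDF_zero] at hsub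
  have h3 : stdGaussCDF t < 1 / 2 + (t - 0) * c := by linarith
  rw [show t / Real.sqrt (2 * Real.pi) = t * c from by rw [hc]; exact div_eq_mul_inv t _]
  linarith

theorem radius_dominates_SE (φ σ : ℝ) (hφ : φ ∈ Set.Ioo (1 / 2 : ℝ) 1) (hσ : 0 < σ) :
    Real.sqrt (Real.pi * σ ^ 2 / 2) * (2 * φ - 1) < σ * stdGaussCDFInv φ := by
  obtain ⟨hφ1, hφ2⟩ := hφ
  set t₀ : ℝ := Real.sqrt (Real.pi / 2) * (2 * φ - 1) with ht₀
  have ht₀pos : 0 < t₀ := by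
    apply mul_pos (Real.sqrt_pos.2 (by positivity))
    linarith
  have hsqrt : Real.sqrt (Real.pi * σ ^ 2 / 2) = σ * Real.sqrt (Real.pi / 2) := by
    rw [show Real.pi * σ ^ 2 / 2 = σ ^ 2 * (Real.pi / 2) by ring, Real.sqrt_mul (by positivity),
      Real.sqrt_sq hσ.le]
  have hφmem : φ ∈ Set.Ioo (0:ℝ) 1 := ⟨by linarith, hφ2⟩
  have hinv := stdGaussCDF_invFun hφmem
  -- Φ t₀ < φ
  have hkey : stdGaussCDF t₀ < φ := by
    have h1 := stdGaussCDF_lt t₀ ht₀pos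
    have hs : Real.sqrt (2 * Real.pi) = 2 * Real.sqrt (Real.pi / 2) := by
      rw [show (2:ℝ) * Real.pi = 2 ^ 2 * (Real.pi / 2) by ring,
        Real.sqrt_mul (by positivity), Real.sqrt_sq (by norm_num)]
    have hspos : 0 < Real.sqrt (Real.pi / 2) := Real.sqrt_pos.2 (by positivity)
    have h2 : t₀ / Real.sqrt (2 * Real.pi) = (2 * φ - 1) / 2 := by
      rw [ht₀, hs]
      field_simp
    linarith
  have : t₀ < stdGaussCDFInv φ := by
    by_contra h
    push_neg at h
    have := stdGaussCDF_strictMono.monotone h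
    rw [hinv] at this
    linarith
  rw [hsqrt, mul_assoc]
  exact (mul_lt_mul_iff_right₀ hσ).2 this
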